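/- (Claim 2, Step 2) Let n ≥ 3, let α ∈ ℝⁿ have strictly decreasing coordinates (α₁ > α₂ > ⋯ > αₙ), and let A be an n×n real matrix with all entries positive such that A *ᵥ (P *ᵥ α) ∼ A *ᵥ α for every n×n permutation matrix P. If every row of A is nonconstant, then each row aₗ of A is constant except in exactly one coordinate (there exist λₗ ≠ γₗ and an index jₗ with aₗ(jₗ) = γₗ and aₗ(i) = λₗ for i ≠ jₗ); moreover the sets I_M(aₗ, α) for l = 1, …, n are pairwise disjoint, each of cardinality (n−1)!, and their cardinalities sum to n!. -/

import Mathlib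

open Matrix BigOperators

/-- A matrix is doubly stochastic: nonnegative entries, row sums and column sums all 1. -/
def IsDoublyStochastic {n : ℕ} (A : Matrix (Fin n) (Fin n) ℝ) : Prop :=
  (∀ i j, 0 ≤ A i j) ∧ (∀ i, ∑ j, A i j = 1) ∧ (∀ j, ∑ i, A i j = 1)

/-- `Maj x y` means `x ≺ y`: `x` is majorized by `y`. -/
def Maj {n : ℕ} (x y : Fin n → ℝ) : Prop :=
  ∃ A : Matrix (Fin n) (Fin n) ℝ, IsDoublyStochastic A ∧ x = A *ᵥ y

/-- `MajEq x y` means `x ∼ y`: mutual majorization. -/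
def MajEq {n : ℕ} (x y : Fin n → ℝ) : Prop := Maj x y ∧ Maj y x

/-- `P` is a permutation matrix. -/
def IsPermMatrix {n : ℕ} (P : Matrix (Fin n) (Fin n) ℝ) : Prop :=
  ∃ σ : Equiv.Perm (Fin n), P = σ.permMatrix ℝ

/-- The increasing rearrangement `x↑` of a vector. -/
noncomputable def incSort {n : ℕ} (x : Fin n → ℝ) : Fin n → ℝ := x ∘ Tuple.sort x

/-- The decreasing rearrangement `x↓` of a vector. -/
noncomputable def decSort {n : ℕ} (x : Fin n → ℝ) : Fin n → ℝ :=
  fun i => (x ∘ Tuple.sort x) i.rev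

/-- The set `I_M(x, y)` of permutation matrices attaining `M(x, y)`. -/
noncomputable def IM {n : ℕ} (x y : Fin n → ℝ) : Set (Matrix (Fin n) (Fin n) ℝ) :=
  {P | IsPermMatrix P ∧ ∑ i, (Pᵀ *ᵥ x) i * decSort y i = ∑ i, decSort x i * decSort y i}

section Auxiliary

variable {n : ℕ}

lemma permMatrix_mulVec (σ : Equiv.Perm (Fin n)) (x : Fin n → ℝ) :
    (σ.permMatrix ℝ) *ᵥ x = x ∘ σ := by
  ext i
  simp [Matrix.mulVec, dotProduct, Equiv.Perm.permMatrix, PEquiv.toMatrix,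
    Equiv.toPEquiv]

lemma permMatrix_transpose_mulVec (σ : Equiv.Perm (Fin n)) (x : Fin n → ℝ) :
    (σ.permMatrix ℝ)ᵀ *ᵥ x = fun i => x (σ⁻¹ i) := by
  ext i
  simp only [Matrix.mulVec, dotProduct, Matrix.transpose_apply,
    Equiv.Perm.permMatrix, PEquiv.toMatrix, Equiv.toPEquiv, Equiv.coe_fn_mk,
    Option.mem_def, Option.some.injEq]
  rw [Finset.sum_eq_single (σ⁻¹ i)]
  · simp
  · intro b _ hb
    have : ¬ σ b = i := fun h => hb (by simp [← h])
    simp [this]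
  · simp

lemma permMatrix_injective :
    Function.Injective (fun σ : Equiv.Perm (Fin n) => σ.permMatrix ℝ) := by
  intro σ τ h
  ext i
  have h2 := congrFun (congrFun h i) (σ i)
  simp only [Equiv.Perm.permMatrix, PEquiv.toMatrix, Equiv.toPEquiv, Equiv.coe_fn_mk,
    Option.mem_def, Option.some.injEq, if_pos rfl] at h2
  by_cases hc : τ i = σ i
  · simp [hc]
  · simp [hc] at h2

/-- The sorting permutation yielding the decreasing rearrangement. -/
noncomputable def esort (x : Fin n → ℝ) : Equiv.Perm (Fin n) :=
  (Fin.revPerm).trans (Tuple.sort x)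

lemma decSort_eq_comp (x : Fin n → ℝ) : decSort x = x ∘ (esort x) := rfl

lemma antitone_decSort (x : Fin n → ℝ) : Antitone (decSort x) := by
  intro i j hij
  exact Tuple.monotone_sort x (by simpa [Fin.rev_le_rev] using hij)

lemma antitone_unique {f : Fin n → ℝ} {σ τ : Equiv.Perm (Fin n)}
    (h1 : Antitone (f ∘ σ)) (h2 : Antitone (f ∘ τ)) : f ∘ σ = f ∘ τ := by
  have := Tuple.unique_monotone (α := ℝᵒᵈ)
    (f := fun i => OrderDual.toDual (f i)) (σ := σ) (τ := τ)
    (fun i j hij => h1 hij) (fun i j hij => h2 hij)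
  funext i
  exact congrFun this i

section Rearrangement
variable {α : Fin n → ℝ} (hα : StrictAnti α)
include hα

lemma monovary_iff_antitone {f : Fin n → ℝ} : Monovary f α ↔ Antitone f := by
  constructor
  · intro h i j hij
    rcases eq_or_lt_of_le hij with h' | h'
    · exact le_of_eq (by rw [h'])
    · exact h (hα h')
  · intro h a b hab
    exact h (le_of_lt ((hα.lt_iff_gt).mp hab))

lemma monovary_decSort (x : Fin n → ℝ) : Monovary (decSort x) α :=
  (monovary_iff_antitone hα).mpr (antitone_decSort x)

omit hα in
lemma comp_esort_symm (x : Fin n → ℝ) (σ : Equiv.Perm (Fin n)) :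
    x ∘ σ = (decSort x) ∘ (σ.trans (esort x).symm) := by
  funext i
  simp [decSort_eq_comp]

lemma sum_perm_le (x : Fin n → ℝ) (σ : Equiv.Perm (Fin n)) :
    ∑ i, x (σ i) * α i ≤ ∑ i, decSort x i * α i := by
  have h := (monovary_decSort hα x).sum_comp_perm_smul_le_sum_smul
    (σ := σ.trans (esort x).symm)
  have key : ∀ i, decSort x ((esort x).symm (σ i)) = x (σ i) :=
    fun i => (congrFun (comp_esort_symm x σ) i).symm
  simpa [smul_eq_mul, key] using h

lemma sum_perm_eq_iff (x : Fin n → ℝ) (σ : Equiv.Perm (Fin n)) :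
    (∑ i, x (σ i) * α i = ∑ i, decSort x i * α i) ↔ Antitone (x ∘ σ) := by
  have key : ∀ i, decSort x ((esort x).symm (σ i)) = x (σ i) :=
    fun i => (congrFun (comp_esort_symm x σ) i).symm
  have h := (monovary_decSort hα x).sum_comp_perm_smul_eq_sum_smul_iff
    (σ := σ.trans (esort x).symm)
  simp only [smul_eq_mul, Equiv.trans_apply, key] at h
  rw [show (decSort x) ∘ (σ.trans (esort x).symm) = x ∘ σ from (comp_esort_symm x σ).symm] at h
  exact h.trans (monovary_iff_antitone hα)

lemma decSort_of_strictAnti : decSort α = α := by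
  have h1 : Antitone (α ∘ (esort α)) := by
    rw [← decSort_eq_comp]; exact antitone_decSort α
  have h2 : Antitone (α ∘ (1 : Equiv.Perm (Fin n))) := by
    simpa using hα.antitone
  have := antitone_unique h1 h2
  rw [decSort_eq_comp]
  simpa using this

end Rearrangement

lemma maj_le_max {x y : Fin n → ℝ} (hxy : Maj x y) {c : ℝ} (hc : ∀ j, y j ≤ c) :
    ∀ i, x i ≤ c := by
  obtain ⟨B, ⟨hB0, hBrow, _⟩, hx⟩ := hxy
  intro i
  have : x i = ∑ j, B i j * y j := by rw [hx]; rfl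
  rw [this]
  calc ∑ j, B i j * y j ≤ ∑ j, B i j * c :=
        Finset.sum_le_sum (fun j _ => mul_le_mul_of_nonneg_left (hc j) (hB0 i j))
    _ = c := by rw [← Finset.sum_mul, hBrow i, one_mul]

open Finset in
lemma maj_count_max {x y : Fin n → ℝ} (hxy : Maj x y) {c : ℝ}
    (hcy : ∀ j, y j ≤ c) :
    (univ.filter fun i => x i = c).card ≤ (univ.filter fun j => y j = c).card := by
  classical
  obtain ⟨B, ⟨hB0, hBrow, hBcol⟩, hx⟩ := hxy
  have hxi : ∀ i, x i = ∑ j, B i j * y j := fun i => by rw [hx]; rfl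
  have hsupp : ∀ i, x i = c → ∑ j ∈ univ.filter (fun j => y j = c), B i j = 1 := by
    intro i hi
    have hzero : ∀ j, y j ≠ c → B i j = 0 := by
      intro j hj
      have hsum : ∑ j, B i j * (c - y j) = 0 := by
        have : ∑ j, B i j * (c - y j) = (∑ j, B i j) * c - ∑ j, B i j * y j := by
          rw [Finset.sum_mul]
          rw [← Finset.sum_sub_distrib]
          congr 1; ext j; ring
        rw [this, hBrow i, one_mul, ← hxi i, hi, sub_self]
      have hterm : ∀ j ∈ univ, 0 ≤ B i j * (c - y j) :=
        fun j _ => mul_nonneg (hB0 i j) (by linarith [hcy j])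
      have := (Finset.sum_eq_zero_iff_of_nonneg hterm).mp hsum j (mem_univ j)
      rcases mul_eq_zero.mp this with h | h
      · exact h
      · exact absurd (by linarith [lt_of_le_of_ne (hcy j) hj] : (0:ℝ) < c - y j) (by linarith)
    have := Finset.sum_filter_add_sum_filter_not univ (fun j => y j = c) (B i)
    have hnot : ∑ j ∈ univ.filter (fun j => ¬ y j = c), B i j = 0 :=
      Finset.sum_eq_zero (fun j hj => hzero j (mem_filter.mp hj).2)
    rw [hnot, add_zero] at this
    rw [this, hBrow i]
  have hcard : ((univ.filter fun i => x i = c).card : ℝ)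
      ≤ ((univ.filter fun j => y j = c).card : ℝ) := by
    calc ((univ.filter fun i => x i = c).card : ℝ)
        = ∑ i ∈ univ.filter (fun i => x i = c),
            ∑ j ∈ univ.filter (fun j => y j = c), B i j := by
          rw [Finset.sum_congr rfl (fun i hi => hsupp i (mem_filter.mp hi).2)]
          simp
      _ ≤ ∑ i, ∑ j ∈ univ.filter (fun j => y j = c), B i j := by
          apply Finset.sum_le_sum_of_subset_of_nonneg (filter_subset _ _)
          intro i _ _
          exact Finset.sum_nonneg (fun j _ => hB0 i j)
      _ = ∑ j ∈ univ.filter (fun j => y j = c), ∑ i, B i j := Finset.sum_comm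
      _ = ((univ.filter fun j => y j = c).card : ℝ) := by
          rw [Finset.sum_congr rfl (fun j _ => hBcol j)]
          simp
  exact_mod_cast hcard

lemma le_choose : ∀ N m : ℕ, 1 ≤ m → m + 1 ≤ N → N ≤ N.choose m := by
  intro N
  induction N with
  | zero => intro m h1 h2; omega
  | succ k ih =>
    intro m h1 h2
    rcases eq_or_lt_of_le h1 with h | h
    · rw [← h, Nat.choose_one_right]
    · rcases eq_or_lt_of_le h2 with h' | h'
      · have : m = k := by omega
        rw [this, Nat.choose_succ_self_right]
      · obtain ⟨t, rfl⟩ : ∃ t, m = t + 1 := ⟨m - 1, by omega⟩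
        rw [Nat.choose_succ_succ]
        have h3 : k ≤ k.choose t := ih t (by omega) (by omega)
        have h4 : 0 < k.choose (t + 1) := Nat.choose_pos (by omega)
        simp only [Nat.succ_eq_add_one] at *
        omega

lemma lt_choose (N m : ℕ) (h1 : 2 ≤ m) (h2 : m + 2 ≤ N) : N < N.choose m := by
  obtain ⟨k, rfl⟩ : ∃ k, N = k + 1 := ⟨N - 1, by omega⟩
  obtain ⟨t, rfl⟩ : ∃ t, m = t + 1 := ⟨m - 1, by omega⟩
  rw [Nat.choose_succ_succ]
  have h3 : k ≤ k.choose t := le_choose k t (by omega) (by omega)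
  have h4 : k ≤ k.choose (t + 1) := le_choose k (t + 1) (by omega) (by omega)
  simp only [Nat.succ_eq_add_one] at *
  omega

lemma fact_mul_fact_le {m : ℕ} (N : ℕ) (h1 : 1 ≤ m) (h2 : m ≤ N - 1) (h3 : 1 ≤ N) :
    m.factorial * (N - m).factorial ≤ (N - 1).factorial := by
  have hmN : m ≤ N := by omega
  have key : N.choose m * (m.factorial * (N - m).factorial) = N.factorial := by
    rw [← mul_assoc]; exact Nat.choose_mul_factorial_mul_factorial hmN
  have hch : N ≤ N.choose m := le_choose N m h1 (by omega)
  have hfac : N.factorial = N * (N - 1).factorial := by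
    obtain ⟨k, rfl⟩ : ∃ k, N = k + 1 := ⟨N - 1, by omega⟩
    simp [Nat.factorial_succ]
  have : N * (m.factorial * (N - m).factorial) ≤ N * (N - 1).factorial := by
    calc N * (m.factorial * (N - m).factorial)
        ≤ N.choose m * (m.factorial * (N - m).factorial) :=
          Nat.mul_le_mul_right _ hch
      _ = N.factorial := key
      _ = N * (N - 1).factorial := hfac
  exact Nat.le_of_mul_le_mul_left this (by omega)

lemma fact_mul_fact_lt {m : ℕ} (N : ℕ) (h1 : 2 ≤ m) (h2 : m + 2 ≤ N) :
    m.factorial * (N - m).factorial < (N - 1).factorial := by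
  have key : N.choose m * (m.factorial * (N - m).factorial) = N.factorial := by
    rw [← mul_assoc]; exact Nat.choose_mul_factorial_mul_factorial (by omega)
  have hch : N < N.choose m := lt_choose N m h1 h2
  have hfac : N.factorial = N * (N - 1).factorial := by
    obtain ⟨k, rfl⟩ : ∃ k, N = k + 1 := ⟨N - 1, by omega⟩
    simp [Nat.factorial_succ]
  have hpos : 0 < m.factorial * (N - m).factorial :=
    Nat.mul_pos (Nat.factorial_pos m) (Nat.factorial_pos (N - m))
  have : N * (m.factorial * (N - m).factorial) < N * (N - 1).factorial := by
    calc N * (m.factorial * (N - m).factorial)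
        < N.choose m * (m.factorial * (N - m).factorial) :=
          (Nat.mul_lt_mul_right hpos).mpr hch
      _ = N.factorial := key
      _ = N * (N - 1).factorial := hfac
  exact Nat.lt_of_mul_lt_mul_left this

open Finset in
lemma card_le_stab_pair (p q : Fin n → Prop) [DecidablePred p] [DecidablePred q]
    (S : Finset (Equiv.Perm (Fin n)))
    (hp : ∀ π ∈ S, ∀ i, p i ↔ p (π i)) (hq : ∀ π ∈ S, ∀ i, q i ↔ q (π i))
    (hdet : ∀ π ∈ S, ∀ π' ∈ S, (∀ i, p i → π i = π' i) → (∀ i, q i → π i = π' i) → π = π') :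
    S.card ≤ (Fintype.card {i // p i}).factorial * (Fintype.card {i // q i}).factorial := by
  classical
  have hinj := Finset.card_le_card_of_injOn
    (s := S)
    (f := fun π : Equiv.Perm (Fin n) =>
      if h : π ∈ S then
        ((π.subtypePerm (fun i => (hp π h i).symm) : Equiv.Perm {i // p i}),
         (π.subtypePerm (fun i => (hq π h i).symm) : Equiv.Perm {i // q i}))
      else (1, 1))
    (t := (Finset.univ : Finset (Equiv.Perm {i // p i} × Equiv.Perm {i // q i})))
    (fun π _ => mem_univ _) ?_
  · calc S.card ≤ _ := hinj
      _ = (Fintype.card {i // p i}).factorial * (Fintype.card {i // q i}).factorial := by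
        simp [Fintype.card_prod, Fintype.card_perm]
  · intro π hπ π' hπ' hEq
    rw [Finset.mem_coe] at hπ hπ'
    simp only [dif_pos hπ, dif_pos hπ'] at hEq
    have h1 := congrArg Prod.fst hEq
    have h2 := congrArg Prod.snd hEq
    simp only [] at h1 h2
    refine hdet π hπ π' hπ' ?_ ?_
    · intro i hi
      have := congrFun (congrArg (fun e => (e : Equiv.Perm {i // p i}).toFun) h1) ⟨i, hi⟩
      exact Subtype.ext_iff.mp this
    · intro i hi
      have := congrFun (congrArg (fun e => (e : Equiv.Perm {i // q i}).toFun) h2) ⟨i, hi⟩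
      exact Subtype.ext_iff.mp this

open Finset in
lemma stab_card_le {y : Fin n → ℝ} {a b : Fin n} (hab : y a ≠ y b) :
    (univ.filter (fun π : Equiv.Perm (Fin n) => ∀ i, y (π i) = y i)).card
      ≤ (n - 1).factorial := by
  classical
  set S := univ.filter (fun π : Equiv.Perm (Fin n) => ∀ i, y (π i) = y i) with hS
  have hmemS : ∀ π ∈ S, ∀ i, y (π i) = y i := by
    intro π hπ; exact (mem_filter.mp hπ).2
  set m := (univ.filter (fun i => y i = y a)).card with hm
  have hm1 : 1 ≤ m := card_pos.mpr ⟨a, by simp⟩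
  have hmn : m ≤ n - 1 := by
    have hsub : univ.filter (fun i => y i = y a) ⊆ univ.erase b := by
      intro i hi
      rw [mem_filter] at hi
      rw [mem_erase]
      exact ⟨fun h => hab (h ▸ hi.2).symm, mem_univ i⟩
    have h2 := card_le_card hsub
    rw [card_erase_of_mem (mem_univ b), card_univ, Fintype.card_fin] at h2
    exact le_trans h2 (le_refl _)
  have hbound := card_le_stab_pair (fun i => y i = y a) (fun i => ¬ y i = y a) S
    (fun π hπ i => by show y i = y a ↔ y (π i) = y a; rw [hmemS π hπ i])
    (fun π hπ i => by show ¬ y i = y a ↔ ¬ y (π i) = y a; rw [hmemS π hπ i])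
    (fun π _ π' _ h1 h2 => Equiv.ext (fun i => by by_cases h : y i = y a
                                                  · exact h1 i h
                                                  · exact h2 i h))
  rw [Fintype.card_subtype, Fintype.card_subtype_compl, Fintype.card_subtype,
    Fintype.card_fin] at hbound
  exact le_trans hbound (fact_mul_fact_le n hm1 hmn (by have := a.pos; omega))

open Finset in
lemma stab_shape (hn : 3 ≤ n) {y : Fin n → ℝ} {a b : Fin n} (hab : y a ≠ y b)
    (hcard : (n - 1).factorial ≤
      (univ.filter (fun π : Equiv.Perm (Fin n) => ∀ i, y (π i) = y i)).card) :
    ∃ (lam gam : ℝ) (j : Fin n), lam ≠ gam ∧ y j = gam ∧ ∀ i, i ≠ j → y i = lam := by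
  classical
  set S := univ.filter (fun π : Equiv.Perm (Fin n) => ∀ i, y (π i) = y i) with hS
  have hmemS : ∀ π ∈ S, ∀ i, y (π i) = y i := fun π hπ => (mem_filter.mp hπ).2
  set m := (univ.filter (fun i => y i = y a)).card with hm
  have hm1 : 1 ≤ m := card_pos.mpr ⟨a, by simp⟩
  have hmn : m ≤ n - 1 := by
    have hsub : univ.filter (fun i => y i = y a) ⊆ univ.erase b := by
      intro i hi
      rw [mem_filter] at hi
      rw [mem_erase]
      exact ⟨fun h => hab (h ▸ hi.2).symm, mem_univ i⟩
    have h2 := card_le_card hsub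
    rwa [card_erase_of_mem (mem_univ b), card_univ, Fintype.card_fin] at h2
  have hcases : m = 1 ∨ m = n - 1 := by
    by_contra hmid
    push_neg at hmid
    have h2m : 2 ≤ m := by omega
    have hm2 : m + 2 ≤ n := by omega
    have hbound := card_le_stab_pair (fun i => y i = y a) (fun i => ¬ y i = y a) S
      (fun π hπ i => by show y i = y a ↔ y (π i) = y a; rw [hmemS π hπ i])
      (fun π hπ i => by show ¬ y i = y a ↔ ¬ y (π i) = y a; rw [hmemS π hπ i])
      (fun π _ π' _ h1 h2 => Equiv.ext (fun i => by by_cases h : y i = y a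
                                                    · exact h1 i h
                                                    · exact h2 i h))
    rw [Fintype.card_subtype, Fintype.card_subtype_compl, Fintype.card_subtype,
      Fintype.card_fin] at hbound
    have hbound' : S.card ≤ m.factorial * (n - m).factorial := hbound
    have := fact_mul_fact_lt n h2m hm2
    omega
  rcases hcases with hm1' | hmn'
  · have hfib : univ.filter (fun i => y i = y a) = {a} := by
      have h1 : (univ.filter (fun i => y i = y a)).card = 1 := by rw [← hm, hm1']
      obtain ⟨c, hc⟩ := card_eq_one.mp h1
      have ha : a ∈ ({c} : Finset (Fin n)) := by rw [← hc]; simp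
      rw [hc, ← mem_singleton.mp ha]
    have huniq : ∀ i, y i = y a → i = a := by
      intro i hi
      have : i ∈ univ.filter (fun i => y i = y a) := by simp [hi]
      rw [hfib, mem_singleton] at this; exact this
    have hfix : ∀ π ∈ S, π a = a := fun π hπ => huniq _ (hmemS π hπ a)
    have hba : b ≠ a := fun h => hab (h ▸ rfl)
    have hconst : ∀ i j, i ≠ a → j ≠ a → y i = y j := by
      by_contra hc
      push_neg at hc
      obtain ⟨i0, j0, hi0, hj0, hij⟩ := hc
      set g := (univ.filter (fun i => y i = y i0)).card with hg
      have hg1 : 1 ≤ g := card_pos.mpr ⟨i0, by simp⟩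
      have hya : ¬ y a = y i0 := fun h => hi0 (huniq i0 h.symm)
      have hgn : g ≤ n - 2 := by
        have hsub : univ.filter (fun i => y i = y i0) ⊆ (univ.erase a).erase j0 := by
          intro i hi
          rw [mem_filter] at hi
          rw [mem_erase, mem_erase]
          refine ⟨fun h => hij (h ▸ hi.2).symm, fun h => hya (h ▸ hi.2), mem_univ i⟩
        have h2 := card_le_card hsub
        rwa [card_erase_of_mem (by rw [mem_erase]; exact ⟨fun h => hj0 h, mem_univ j0⟩),
          card_erase_of_mem (mem_univ a), card_univ, Fintype.card_fin] at h2
      have hbound := card_le_stab_pair (fun i => y i = y i0)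
        (fun i => ¬ y i = y i0 ∧ i ≠ a) S
        (fun π hπ i => by show y i = y i0 ↔ y (π i) = y i0; rw [hmemS π hπ i])
        (fun π hπ i => by
          show ¬ y i = y i0 ∧ i ≠ a ↔ ¬ y (π i) = y i0 ∧ π i ≠ a
          rw [hmemS π hπ i]
          constructor
          · rintro ⟨h1, h2⟩
            exact ⟨h1, fun h => h2 (π.injective (h.trans (hfix π hπ).symm))⟩
          · rintro ⟨h1, h2⟩
            exact ⟨h1, fun h => h2 (h ▸ hfix π hπ)⟩)
        (fun π hπ π' hπ' h1 h2 => Equiv.ext (fun i => by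
          by_cases h : y i = y i0
          · exact h1 i h
          · by_cases h' : i = a
            · rw [h']; rw [hfix π hπ, hfix π' hπ']
            · exact h2 i ⟨h, h'⟩))
      have hcard1 : Fintype.card {i // y i = y i0} = g := Fintype.card_subtype _
      have hcard2 : Fintype.card {i // ¬ y i = y i0 ∧ i ≠ a} = n - g - 1 := by
        rw [Fintype.card_subtype]
        have : univ.filter (fun i => ¬ y i = y i0 ∧ i ≠ a)
            = (univ.filter (fun i => ¬ y i = y i0)).erase a := by
          ext i
          rw [mem_filter, mem_erase, mem_filter]
          tauto
        rw [this, card_erase_of_mem (by simp [hya]), Finset.filter_not, card_sdiff_of_subset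
          (filter_subset _ _), card_univ, Fintype.card_fin]
      rw [hcard1, hcard2] at hbound
      have hle : g.factorial * (n - g - 1).factorial ≤ (n - 2).factorial := by
        have := fact_mul_fact_le (n - 1) hg1 (by omega) (by omega)
        have heq : n - 1 - g = n - g - 1 := by omega
        rw [heq] at this
        have heq2 : n - 1 - 1 = n - 2 := by omega
        rwa [heq2] at this
      have hlt : (n - 2).factorial < (n - 1).factorial := by
        apply Nat.factorial_lt (by omega) |>.mpr
        omega
      omega
    exact ⟨y b, y a, a, fun h => hab h.symm, rfl, fun i hi => hconst i b hi hba⟩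
  · have hcomp : (univ.filter (fun i => ¬ y i = y a)).card = 1 := by
      rw [Finset.filter_not, card_sdiff_of_subset (filter_subset _ _), card_univ, Fintype.card_fin,
        ← hm, hmn']
      omega
    obtain ⟨j, hj⟩ := card_eq_one.mp hcomp
    have hja : ¬ y j = y a := by
      have : j ∈ univ.filter (fun i => ¬ y i = y a) := by rw [hj]; exact mem_singleton_self j
      exact (mem_filter.mp this).2
    refine ⟨y a, y j, j, fun h => hja h.symm, rfl, ?_⟩
    intro i hi
    by_contra h
    have : i ∈ univ.filter (fun i => ¬ y i = y a) := by simp [h]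
    rw [hj, mem_singleton] at this
    exact hi this

end Auxiliary

/-- Claim 2, Step 2: if every row of `A` is nonconstant, then each
row is constant except in exactly one coordinate; moreover the sets `I_M(aₗ, α)`
are pairwise disjoint, each of cardinality `(n-1)!`, with cardinalities summing
to `n!`. -/
theorem rows_almost_constant {n : ℕ} (hn : 3 ≤ n) (α : Fin n → ℝ) (hα : StrictAnti α)
    (A : Matrix (Fin n) (Fin n) ℝ) (hpos : ∀ i j, 0 < A i j)
    (hA : ∀ P : Matrix (Fin n) (Fin n) ℝ, IsPermMatrix P →
      MajEq (A *ᵥ (P *ᵥ α)) (A *ᵥ α))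
    (hrow : ∀ i : Fin n, ∃ j j' : Fin n, A i j ≠ A i j') :
    (∀ l : Fin n, ∃ (lam gam : ℝ) (j : Fin n), lam ≠ gam ∧ A l j = gam ∧
      ∀ i : Fin n, i ≠ j → A l i = lam) ∧
    (∀ l k : Fin n, l ≠ k → IM (A l) α ∩ IM (A k) α = ∅) ∧
    (∀ l : Fin n, (IM (A l) α).ncard = (n - 1).factorial) ∧
    (∑ l : Fin n, (IM (A l) α).ncard = n.factorial) := by
  classical
  haveI hne : Nonempty (Fin n) := ⟨⟨0, by omega⟩⟩
  -- hypothesis in permutation form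
  have hAσ : ∀ σ : Equiv.Perm (Fin n), MajEq (A *ᵥ (α ∘ σ)) (A *ᵥ α) := by
    intro σ
    have := hA (σ.permMatrix ℝ) ⟨σ, rfl⟩
    rwa [permMatrix_mulVec] at this
  -- the maximal entry
  set c := Finset.univ.sup' Finset.univ_nonempty (A *ᵥ α) with hc
  have hcv : ∀ k, (A *ᵥ α) k ≤ c := fun k => Finset.le_sup' _ (Finset.mem_univ k)
  have hmax : ∀ σ : Equiv.Perm (Fin n), ∀ k, (A *ᵥ (α ∘ σ)) k ≤ c :=
    fun σ => maj_le_max (hAσ σ).1 hcv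
  set μ := (Finset.univ.filter fun k => (A *ᵥ α) k = c).card with hμ
  have hμpos : 1 ≤ μ := by
    obtain ⟨k0, _, hk0⟩ := Finset.exists_mem_eq_sup' Finset.univ_nonempty (A *ᵥ α)
    exact Finset.card_pos.mpr ⟨k0, by simp [hk0.symm, hc]⟩
  have hcount : ∀ σ : Equiv.Perm (Fin n),
      (Finset.univ.filter fun k => (A *ᵥ (α ∘ σ)) k = c).card = μ := by
    intro σ
    exact le_antisymm (maj_count_max (hAσ σ).1 hcv) (maj_count_max (hAσ σ).2 (hmax σ))
  -- sums in permutation form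
  have hD : ∀ (σ : Equiv.Perm (Fin n)) (k : Fin n),
      (A *ᵥ (α ∘ σ)) k = ∑ i, A k (σ⁻¹ i) * α i := by
    intro σ k
    show ∑ j, A k j * (α ∘ σ) j = _
    exact Fintype.sum_equiv σ _ _ (fun j => by simp)
  set M : Fin n → ℝ := fun k => ∑ i, decSort (A k) i * α i with hM
  have hDle : ∀ (σ : Equiv.Perm (Fin n)) (k : Fin n), ∑ i, A k (σ⁻¹ i) * α i ≤ M k :=
    fun σ k => sum_perm_le hα (A k) σ⁻¹
  have hMc : ∀ k, M k ≤ c := by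
    intro k
    have h1 : (A *ᵥ (α ∘ ((esort (A k))⁻¹ : Equiv.Perm (Fin n)))) k = M k := by
      rw [hD]
      simp [hM, decSort_eq_comp]
    calc M k = _ := h1.symm
      _ ≤ c := hmax _ k
  -- the sets of optimal permutations
  set T : Fin n → Finset (Equiv.Perm (Fin n)) :=
    fun k => Finset.univ.filter (fun σ => ∑ i, A k (σ⁻¹ i) * α i = c) with hT
  -- double counting
  have hdouble : ∑ k, (T k).card = n.factorial * μ := by
    have h1 : ∀ k, (T k).card
        = ∑ σ : Equiv.Perm (Fin n), if ∑ i, A k (σ⁻¹ i) * α i = c then 1 else 0 := by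
      intro k
      rw [hT]
      rw [Finset.card_filter]
    have h2 : ∀ σ : Equiv.Perm (Fin n),
        (∑ k, if ∑ i, A k (σ⁻¹ i) * α i = c then 1 else 0) = μ := by
      intro σ
      rw [← hcount σ, Finset.card_filter]
      congr 1
      funext k
      rw [hD σ k]
    calc ∑ k, (T k).card
        = ∑ k, ∑ σ : Equiv.Perm (Fin n), if ∑ i, A k (σ⁻¹ i) * α i = c then 1 else 0 :=
          Finset.sum_congr rfl (fun k _ => h1 k)
      _ = ∑ σ : Equiv.Perm (Fin n), ∑ k, if ∑ i, A k (σ⁻¹ i) * α i = c then 1 else 0 :=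
          Finset.sum_comm
      _ = ∑ _σ : Equiv.Perm (Fin n), μ := Finset.sum_congr rfl (fun σ _ => h2 σ)
      _ = n.factorial * μ := by
          rw [Finset.sum_const, Finset.card_univ, Fintype.card_perm, Fintype.card_fin,
            smul_eq_mul]
  -- each T k is inside the set of antitone arrangements, injecting into a stabilizer
  have hrow' : ∀ k, ∃ a b, decSort (A k) a ≠ decSort (A k) b := by
    intro k
    obtain ⟨j, j', hjj⟩ := hrow k
    exact ⟨(esort (A k)).symm j, (esort (A k)).symm j', by
      rw [decSort_eq_comp]
      simpa using hjj⟩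
  have hSinj : ∀ k, (Finset.univ.filter
        (fun σ : Equiv.Perm (Fin n) => Antitone (fun i => A k (σ⁻¹ i)))).card
      ≤ (Finset.univ.filter (fun π : Equiv.Perm (Fin n) =>
          ∀ i, decSort (A k) (π i) = decSort (A k) i)).card := by
    intro k
    apply Finset.card_le_card_of_injOn
      (f := fun σ : Equiv.Perm (Fin n) => σ⁻¹.trans (esort (A k)).symm)
    · intro σ hσ
      simp only [Finset.mem_coe, Finset.mem_filter, Finset.mem_univ, true_and] at hσ
      rw [Finset.mem_coe, Finset.mem_filter]
      refine ⟨Finset.mem_univ _, ?_⟩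
      have hanti : Antitone (decSort (A k) ∘ (σ⁻¹.trans (esort (A k)).symm)) := by
        have heq2 : decSort (A k) ∘ (σ⁻¹.trans (esort (A k)).symm) = A k ∘ ⇑σ⁻¹ :=
          (comp_esort_symm (A k) σ⁻¹).symm
        rw [heq2]
        exact fun i j hij => hσ hij
      have hanti1 : Antitone (decSort (A k) ∘ (1 : Equiv.Perm (Fin n))) := by
        simpa using antitone_decSort (A k)
      have key := antitone_unique hanti hanti1
      intro i
      have := congrFun key i
      simpa using this
    · intro σ hσ τ hτ h
      have h2 : σ⁻¹ = τ⁻¹ := by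
        have h3 := congrArg (fun z : Equiv.Perm (Fin n) => z.trans (esort (A k))) h
        simpa [Equiv.trans_assoc] using h3
      exact inv_injective h2
  have hTsub : ∀ k, T k ⊆ Finset.univ.filter
      (fun σ : Equiv.Perm (Fin n) => Antitone (fun i => A k (σ⁻¹ i))) := by
    intro k σ hσ
    simp only [hT, Finset.mem_filter, Finset.mem_univ, true_and] at hσ
    rw [Finset.mem_filter]
    refine ⟨Finset.mem_univ _, ?_⟩
    have heq : ∑ i, A k (σ⁻¹ i) * α i = M k :=
      le_antisymm (hDle σ k) (by rw [hσ]; exact hMc k)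
    have h4 := (sum_perm_eq_iff hα (A k) σ⁻¹).mp heq
    exact fun i j hij => h4 hij
  have hstab_le : ∀ k, (Finset.univ.filter (fun π : Equiv.Perm (Fin n) =>
      ∀ i, decSort (A k) (π i) = decSort (A k) i)).card ≤ (n - 1).factorial := by
    intro k
    obtain ⟨a, b, hab⟩ := hrow' k
    exact stab_card_le hab
  have hTle : ∀ k, (T k).card ≤ (n - 1).factorial :=
    fun k => le_trans (Finset.card_le_card (hTsub k)) (le_trans (hSinj k) (hstab_le k))
  -- forcing equality
  have hnfact : n * (n - 1).factorial = n.factorial := by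
    obtain ⟨t, rfl⟩ : ∃ t, n = t + 1 := ⟨n - 1, by omega⟩
    simp [Nat.factorial_succ]
  have hsum_le : ∑ k, (T k).card ≤ n * (n - 1).factorial := by
    calc ∑ k, (T k).card ≤ ∑ _k : Fin n, (n - 1).factorial :=
          Finset.sum_le_sum (fun k _ => hTle k)
      _ = n * (n - 1).factorial := by
          rw [Finset.sum_const, Finset.card_univ, Fintype.card_fin, smul_eq_mul]
  have hfactpos : 0 < n.factorial := Nat.factorial_pos n
  have hμ1 : μ = 1 := by
    have h1 : n.factorial * μ ≤ n * (n - 1).factorial := hdouble ▸ hsum_le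
    rw [hnfact] at h1
    nlinarith [hμpos, hfactpos]
  have hTcard : ∀ k, (T k).card = (n - 1).factorial := by
    by_contra hcon
    push_neg at hcon
    obtain ⟨k0, hk0⟩ := hcon
    have hlt : (T k0).card < (n - 1).factorial := lt_of_le_of_ne (hTle k0) hk0
    have : ∑ k, (T k).card < ∑ _k : Fin n, (n - 1).factorial :=
      Finset.sum_lt_sum (fun k _ => hTle k) ⟨k0, Finset.mem_univ k0, hlt⟩
    rw [Finset.sum_const, Finset.card_univ, Fintype.card_fin, smul_eq_mul, hnfact] at this
    rw [hdouble, hμ1, mul_one] at this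
    omega
  have hfactpos' : 0 < (n - 1).factorial := Nat.factorial_pos _
  -- M k = c for every k
  have hMk : ∀ k, M k = c := by
    intro k
    have hTne : (T k).Nonempty := Finset.card_pos.mp (by rw [hTcard k]; exact hfactpos')
    obtain ⟨σ0, hσ0⟩ := hTne
    simp only [hT, Finset.mem_filter, Finset.mem_univ, true_and] at hσ0
    exact le_antisymm (hMc k) (by rw [← hσ0]; exact hDle σ0 k)
  -- T k equals the set of matrices attaining M in IM
  have hIM : ∀ l, IM (A l) α
      = (fun σ : Equiv.Perm (Fin n) => σ.permMatrix ℝ) '' ((T l : Set (Equiv.Perm (Fin n)))) := by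
    intro l
    ext P
    simp only [IM, Set.mem_setOf_eq, Set.mem_image, Finset.mem_coe]
    constructor
    · rintro ⟨⟨σ, rfl⟩, hsum⟩
      refine ⟨σ, ?_, rfl⟩
      rw [permMatrix_transpose_mulVec, decSort_of_strictAnti hα] at hsum
      simp only [hT, Finset.mem_filter, Finset.mem_univ, true_and]
      rw [hsum]; exact (hMk l)
    · rintro ⟨σ, hσ, rfl⟩
      simp only [hT, Finset.mem_filter, Finset.mem_univ, true_and] at hσ
      refine ⟨⟨σ, rfl⟩, ?_⟩
      rw [permMatrix_transpose_mulVec, decSort_of_strictAnti hα]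
      rw [hσ, ← hMk l]
  have hIMcard : ∀ l, (IM (A l) α).ncard = (n - 1).factorial := by
    intro l
    rw [hIM l, Set.ncard_image_of_injective _ permMatrix_injective,
      Set.ncard_coe_finset, hTcard l]
  refine ⟨?_, ?_, hIMcard, ?_⟩
  · -- shape of the rows
    intro l
    obtain ⟨a, b, hab⟩ := hrow' l
    have hstab_ge : (n - 1).factorial ≤ (Finset.univ.filter (fun π : Equiv.Perm (Fin n) =>
        ∀ i, decSort (A l) (π i) = decSort (A l) i)).card := by
      calc (n - 1).factorial = (T l).card := (hTcard l).symm
        _ ≤ _ := Finset.card_le_card (hTsub l)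
        _ ≤ _ := hSinj l
    obtain ⟨lam, gam, j, hlg, hyj, hyoff⟩ := stab_shape hn hab hstab_ge
    refine ⟨lam, gam, esort (A l) j, hlg, ?_, ?_⟩
    · have : decSort (A l) j = A l (esort (A l) j) := by rw [decSort_eq_comp]; rfl
      rw [← this, hyj]
    · intro i hi
      have h1 : (esort (A l)).symm i ≠ j := by
        intro h
        apply hi
        rw [← h]
        simp
      have h2 : decSort (A l) ((esort (A l)).symm i) = A l i := by
        rw [decSort_eq_comp]
        simp
      rw [← h2]
      exact hyoff _ h1
  · -- disjointness
    intro l k hlk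
    by_contra hcon
    obtain ⟨P, hPl, hPk⟩ := Set.not_disjoint_iff.mp (fun hd =>
      hcon (Set.disjoint_iff_inter_eq_empty.mp hd))
    rw [hIM l] at hPl
    rw [hIM k] at hPk
    obtain ⟨σ, hσ, rfl⟩ := hPl
    obtain ⟨τ, hτ, hτeq⟩ := hPk
    have hστ : τ = σ := permMatrix_injective hτeq
    rw [hστ] at hτ
    simp only [hT, Finset.mem_coe, Finset.mem_filter, Finset.mem_univ, true_and] at hσ hτ
    have hl : l ∈ Finset.univ.filter (fun k' => (A *ᵥ (α ∘ σ)) k' = c) := by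
      rw [Finset.mem_filter]
      exact ⟨Finset.mem_univ _, by rw [hD σ l]; exact hσ⟩
    have hk : k ∈ Finset.univ.filter (fun k' => (A *ᵥ (α ∘ σ)) k' = c) := by
      rw [Finset.mem_filter]
      exact ⟨Finset.mem_univ _, by rw [hD σ k]; exact hτ⟩
    have hsub2 : ({l, k} : Finset (Fin n))
        ⊆ Finset.univ.filter (fun k' => (A *ᵥ (α ∘ σ)) k' = c) := by
      intro x hx
      rcases Finset.mem_insert.mp hx with h | h
      · rw [h]; exact hl
      · rw [Finset.mem_singleton.mp h]; exact hk
    have h2 : 2 ≤ (Finset.univ.filter (fun k' => (A *ᵥ (α ∘ σ)) k' = c)).card := by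
      calc 2 = ({l, k} : Finset (Fin n)).card := (Finset.card_pair hlk).symm
        _ ≤ _ := Finset.card_le_card hsub2
    rw [hcount σ, hμ1] at h2
    omega
  · -- total sum
    calc ∑ l : Fin n, (IM (A l) α).ncard = ∑ _l : Fin n, (n - 1).factorial :=
          Finset.sum_congr rfl (fun l _ => hIMcard l)
      _ = n * (n - 1).factorial := by
          rw [Finset.sum_const, Finset.card_univ, Fintype.card_fin, smul_eq_mul]
      _ = n.factorial := hnfact
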